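/- Let X be a compact metric space and f : X → X a homeomorphism that is non-wandering. Then for every nonempty open ball B ⊆ X there exists a nested sequence of nonempty closed sets B ⊇ B_1 ⊇ B_2 ⊇ ⋯ with diam(B_k) ≤ 1/k and an increasing sequence of integers n_1 < n_2 < ⋯ such that f^{n_k}(B_k) ⊆ B_{k−1} for every k (with B_0 = B); consequently the unique point x* ∈ ⋂_k B_k satisfies f^{n_k}(x*) → x*. -/

import Mathlib

open Filter Topology Metric Set

theorem nonwandering_nested_closed_sets {X : Type*} [MetricSpace X] [CompactSpace X]
    (f : X ≃ₜ X)
    (hnw : ∀ U : Set X, IsOpen U → U.Nonempty →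
      ∃ n : ℕ, 1 ≤ n ∧ ((⇑f)^[n] '' U ∩ U).Nonempty)
    (x0 : X) (r : ℝ) (hr : 0 < r) :
    ∃ (B : ℕ → Set X) (ns : ℕ → ℕ),
      B 0 = Metric.ball x0 r ∧ StrictMono ns ∧
      (∀ k, 1 ≤ k → IsClosed (B k) ∧ (B k).Nonempty ∧ Metric.diam (B k) ≤ 1 / (k : ℝ) ∧
        B k ⊆ B (k - 1) ∧ (⇑f)^[ns k] '' B k ⊆ B (k - 1)) ∧
      ∃ x : X, (∀ k, 1 ≤ k → x ∈ B k) ∧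
        Tendsto (fun k => (⇑f)^[ns k] x) atTop (𝓝 x) := by
  -- Step 1: returns can be made arbitrarily late
  have ret : ∀ (N : ℕ) (U : Set X), IsOpen U → U.Nonempty →
      ∃ n, N < n ∧ ∃ y ∈ U, (⇑f)^[n] y ∈ U := by
    intro N
    induction N with
    | zero =>
      intro U hU hne
      obtain ⟨n, hn1, x, ⟨y, hyU, hyx⟩, hxU⟩ := hnw U hU hne
      exact ⟨n, hn1, y, hyU, hyx ▸ hxU⟩
    | succ N ih =>
      intro U hU hne
      obtain ⟨n, hnN, y, hyU, hfyU⟩ := ih U hU hne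
      set V : Set X := U ∩ (⇑f)^[n] ⁻¹' U with hV
      have hVopen : IsOpen V := hU.inter ((f.continuous.iterate n).isOpen_preimage U hU)
      have hVne : V.Nonempty := ⟨y, hyU, hfyU⟩
      obtain ⟨m, hm1, x, ⟨z, hzV, hzx⟩, hxV⟩ := hnw V hVopen hVne
      refine ⟨n + m, by omega, z, hzV.1, ?_⟩
      have : (⇑f)^[n + m] z = (⇑f)^[n] ((⇑f)^[m] z) := Function.iterate_add_apply _ n m z
      rw [this, hzx]
      exact hxV.2
  -- Step 2: the one-step refinement
  have key : ∀ (s : X × ℝ × ℕ) (ε : ℝ), ∃ t : X × ℝ × ℕ,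
      0 < s.2.1 → 0 < ε →
      0 < t.2.1 ∧ s.2.2 < t.2.2 ∧ closedBall t.1 t.2.1 ⊆ ball s.1 s.2.1 ∧
      2 * t.2.1 ≤ ε ∧ (⇑f)^[t.2.2] '' closedBall t.1 t.2.1 ⊆ ball s.1 s.2.1 := by
    rintro ⟨y, δ, N⟩
    intro ε
    by_cases hδ : 0 < δ
    · by_cases hε : 0 < ε
      · obtain ⟨n, hnN, z, hzU, hfzU⟩ := ret N (ball y δ) isOpen_ball (nonempty_ball.2 hδ)
        set W : Set X := ball y δ ∩ (⇑f)^[n] ⁻¹' (ball y δ) with hW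
        have hWopen : IsOpen W :=
          isOpen_ball.inter ((f.continuous.iterate n).isOpen_preimage _ isOpen_ball)
        have hzW : z ∈ W := ⟨hzU, hfzU⟩
        obtain ⟨ρ, hρ0, hρW⟩ := (Metric.nhds_basis_closedBall.mem_iff).1
          (hWopen.mem_nhds hzW)
        refine ⟨⟨z, min ρ (ε / 2), n⟩, fun _ _ => ?_⟩
        have hsub : closedBall z (min ρ (ε / 2)) ⊆ W :=
          (closedBall_subset_closedBall (min_le_left _ _)).trans hρW
        refine ⟨lt_min hρ0 (by linarith), hnN, hsub.trans inter_subset_left, ?_, ?_⟩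
        · have : min ρ (ε / 2) ≤ ε / 2 := min_le_right _ _
          linarith
        · intro w hw
          obtain ⟨u, hu, rfl⟩ := hw
          exact (hsub hu).2
      · exact ⟨⟨y, δ, N⟩, fun _ h => absurd h hε⟩
    · exact ⟨⟨y, δ, N⟩, fun h => absurd h hδ⟩
  choose F hF using key
  -- Step 3: recursive construction
  set g : ℕ → X × ℝ × ℕ := fun k => Nat.rec (x0, r, 0) (fun k ih => F ih (1 / (k + 1 : ℝ))) k
    with hg
  have hg0 : g 0 = (x0, r, 0) := rfl
  have hgs : ∀ k, g (k + 1) = F (g k) (1 / (k + 1 : ℝ)) := fun k => rfl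
  have hεpos : ∀ k : ℕ, (0 : ℝ) < 1 / (k + 1 : ℝ) := fun k => by positivity
  have pos : ∀ k, 0 < (g k).2.1 := by
    intro k
    induction k with
    | zero => exact hr
    | succ k ih => exact (hF (g k) _ ih (hεpos k)).1
  have prop : ∀ k, 0 < (g (k + 1)).2.1 ∧ (g k).2.2 < (g (k + 1)).2.2 ∧
      closedBall (g (k + 1)).1 (g (k + 1)).2.1 ⊆ ball (g k).1 (g k).2.1 ∧
      2 * (g (k + 1)).2.1 ≤ 1 / (k + 1 : ℝ) ∧
      (⇑f)^[(g (k + 1)).2.2] '' closedBall (g (k + 1)).1 (g (k + 1)).2.1 ⊆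
        ball (g k).1 (g k).2.1 := fun k => hF (g k) _ (pos k) (hεpos k)
  set B : ℕ → Set X := fun k => Nat.casesOn k (Metric.ball x0 r)
    (fun j => closedBall (g (j + 1)).1 (g (j + 1)).2.1) with hB
  set ns : ℕ → ℕ := fun k => (g k).2.2 with hns
  have hBsucc : ∀ j, B (j + 1) = closedBall (g (j + 1)).1 (g (j + 1)).2.1 := fun j => rfl
  have hball : ∀ j, ball (g j).1 (g j).2.1 ⊆ B j := by
    intro j
    cases j with
    | zero => rw [hg0]; exact subset_rfl
    | succ j => exact ball_subset_closedBall
  have hBne : ∀ j, (B (j + 1)).Nonempty := fun j =>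
    nonempty_closedBall.2 (pos (j + 1)).le
  have hBnested : ∀ j, B (j + 1) ⊆ B j := fun j => (prop j).2.2.1.trans (hball j)
  have hmem : ∀ {k}, 1 ≤ k → ∀ x ∈ B k, ∀ y ∈ B k, dist x y ≤ 1 / (k : ℝ) := by
    intro k hk x hx y hy
    obtain ⟨j, rfl⟩ := Nat.exists_eq_add_of_le hk
    rw [show 1 + j = j + 1 from by omega] at hx hy
    have hx' := mem_closedBall.1 hx
    have hy' := mem_closedBall.1 hy
    have h2 := (prop j).2.2.2.1
    have := dist_triangle_right x y (g (j + 1)).1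
    have : dist x y ≤ 2 * (g (j + 1)).2.1 := by
      rw [two_mul]; exact le_trans (dist_triangle_right x y (g (j + 1)).1)
        (add_le_add hx' hy')
    calc dist x y ≤ 1 / (j + 1 : ℝ) := le_trans this h2
      _ = 1 / ((1 + j : ℕ) : ℝ) := by push_cast; ring_nf
  have hdiam : ∀ k, 1 ≤ k → Metric.diam (B k) ≤ 1 / (k : ℝ) := by
    intro k hk
    exact Metric.diam_le_of_forall_dist_le (by positivity)
      (fun x hx y hy => hmem hk x hx y hy)
  -- main properties for k ≥ 1
  have main : ∀ k, 1 ≤ k → IsClosed (B k) ∧ (B k).Nonempty ∧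
      Metric.diam (B k) ≤ 1 / (k : ℝ) ∧ B k ⊆ B (k - 1) ∧
      (⇑f)^[ns k] '' B k ⊆ B (k - 1) := by
    intro k hk
    obtain ⟨j, rfl⟩ := Nat.exists_eq_add_of_le hk
    have hk1 : 1 + j = j + 1 := by omega
    rw [hk1]
    simp only [Nat.add_sub_cancel]
    exact ⟨isClosed_closedBall, hBne j, by rw [← hk1]; exact hdiam _ hk, hBnested j,
      ((prop j).2.2.2.2).trans (hball j)⟩
  -- the intersection point
  have hcompact : ∀ j, IsCompact (B (j + 1)) := fun j =>
    isClosed_closedBall.isCompact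
  obtain ⟨x, hx⟩ := IsCompact.nonempty_iInter_of_sequence_nonempty_isCompact_isClosed
    (fun j => B (j + 1)) (fun j => hBnested (j + 1)) hBne (hcompact 0)
    (fun j => isClosed_closedBall)
  have hxB : ∀ k, 1 ≤ k → x ∈ B k := by
    intro k hk
    obtain ⟨j, rfl⟩ := Nat.exists_eq_add_of_le hk
    have : x ∈ B (j + 1) := mem_iInter.1 hx j
    rwa [show 1 + j = j + 1 by omega]
  have hxB' : ∀ j, x ∈ B j := by
    intro j
    cases j with
    | zero => exact hBnested 0 (hxB 1 le_rfl)
    | succ j => exact hxB (j + 1) (by omega)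
  refine ⟨B, ns, rfl, strictMono_nat_of_lt_succ (fun k => (prop k).2.1), main, x, hxB, ?_⟩
  -- convergence
  rw [tendsto_iff_dist_tendsto_zero]
  have hbound : ∀ k, 2 ≤ k → dist ((⇑f)^[ns k] x) x ≤ 1 / ((k - 1 : ℕ) : ℝ) := by
    intro k hk
    have h1 : 1 ≤ k := by omega
    have him : (⇑f)^[ns k] x ∈ B (k - 1) := (main k h1).2.2.2.2 ⟨x, hxB k h1, rfl⟩
    exact hmem (by omega) _ him x (hxB' (k - 1))
  refine squeeze_zero' (Eventually.of_forall fun k => dist_nonneg)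
    (eventually_atTop.2 ⟨2, hbound⟩) ?_
  exact tendsto_one_div_atTop_nhds_zero_nat.comp (tendsto_sub_atTop_nat 1)
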